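/- Let G be a connected finite graph regarded as a 1-dimensional CW complex, and let C_1, …, C_k be a weakly fundamental cycle basis of G, i.e., a cycle basis ordered so that each C_i contains an edge e_i not contained in any C_j with j > i. Then the complement G ∖ {e_1, …, e_k} is a spanning tree of G. -/

import Mathlib

open SimpleGraph

/-- The `Z/2` edge chain (indicator of the edge list) of a walk in a simple graph. -/
def walkChain {V : Type*} [DecidableEq V] {G : SimpleGraph V} {u v : V}
    (w : G.Walk u v) : Sym2 V → ZMod 2 :=
  fun s => if s ∈ w.edges then 1 else 0

/-- The cycle-space condition over `Z/2`: the chain is supported on edges of `G`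
and its boundary vanishes at every vertex. -/
def cycleCond {V : Type*} [Fintype V] [DecidableEq V] (G : SimpleGraph V)
    (c : Sym2 V → ZMod 2) : Prop :=
  (∀ s : Sym2 V, c s ≠ 0 → s ∈ G.edgeSet) ∧
    ∀ x : V, (∑ s : Sym2 V, if x ∈ s then c s else 0) = 0

/-- One step of the connectivity argument: walks transfer through deletion of a
non-separating edge. -/
lemma aux_reach_del {V : Type} {G : SimpleGraph V} {v w : V}
    (hvw : (G.deleteEdges {s(v, w)}).Reachable v w) {x y : V} (p : G.Walk x y) :
    (G.deleteEdges {s(v, w)}).Reachable x y := by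
  induction p with
  | nil => exact Reachable.refl _
  | @cons a b c h p ih =>
    refine Reachable.trans ?_ ih
    by_cases hmem : s(a, b) ∈ ({s(v, w)} : Set (Sym2 V))
    · simp only [Set.mem_singleton_iff, Sym2.eq_iff] at hmem
      rcases hmem with ⟨rfl, rfl⟩ | ⟨rfl, rfl⟩
      · exact hvw
      · exact hvw.symm
    · exact Adj.reachable (deleteEdges_adj.mpr ⟨h, hmem⟩)

/-- Deleting an edge lying on a cycle preserves connectivity. -/
lemma aux_conn_del {V : Type} {G : SimpleGraph V} (hG : G.Connected)
    (e0 : Sym2 V) {u0 : V} (c : G.Walk u0 u0) (hc : c.IsCycle) (he : e0 ∈ c.edges) :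
    (G.deleteEdges {e0}).Connected := by
  induction e0 using Sym2.ind with
  | _ v w =>
    have h2 : G.Adj v w ∧ (G \ fromEdgeSet {s(v, w)}).Reachable v w :=
      adj_and_reachable_delete_edges_iff_exists_cycle.mpr ⟨u0, c, hc, he⟩
    have hr : (G.deleteEdges {s(v, w)}).Reachable v w := h2.2
    haveI : Nonempty V := hG.nonempty
    apply Connected.mk
    intro x y
    obtain ⟨p⟩ := hG.preconnected x y
    exact aux_reach_del hr p

/-- The boundary of a walk's edge chain (as a list sum) is the indicator of its
endpoints, mod 2. -/
lemma aux_boundary {V : Type} [DecidableEq V] {G : SimpleGraph V} {u v : V}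
    (w : G.Walk u v) (x : V) :
    (w.edges.map (fun s => if x ∈ s then (1 : ZMod 2) else 0)).sum
      = (if x = u then 1 else 0) + (if x = v then 1 else 0) := by
  induction w with
  | nil =>
    simp only [Walk.edges_nil, List.map_nil, List.sum_nil]
    split_ifs <;> decide
  | @cons a b c h p ih =>
    have hab : a ≠ b := h.ne
    simp only [Walk.edges_cons, List.map_cons, List.sum_cons, ih, Sym2.mem_iff]
    by_cases hxa : x = a
    · subst hxa
      simp [hab]
    · by_cases hxb : x = b
      · subst hxb
        simp only [hxa, or_self, if_false, if_true, or_true, eq_self_iff_true]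
        rw [← add_assoc]
        simp [show (1 : ZMod 2) + 1 = 0 from rfl]
      · simp [hxa, hxb]

/-- Sum over all of `Sym2 V` versus sum over the (nodup) edge list. -/
lemma aux_sum_eq {V : Type} [Fintype V] [DecidableEq V] {G : SimpleGraph V} {u v : V}
    (w : G.Walk u v) (hw : w.edges.Nodup) (x : V) :
    (∑ s : Sym2 V, if x ∈ s then walkChain w s else 0)
      = (w.edges.map (fun s => if x ∈ s then (1 : ZMod 2) else 0)).sum := by
  rw [← List.sum_toFinset _ hw]
  have key : ∀ s : Sym2 V, (if x ∈ s then walkChain w s else 0)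
      = if s ∈ w.edges.toFinset then (if x ∈ s then (1 : ZMod 2) else 0) else 0 := by
    intro s
    simp only [walkChain, List.mem_toFinset]
    by_cases h1 : x ∈ s <;> by_cases h2 : s ∈ w.edges <;> simp [h1, h2]
  rw [Finset.sum_congr rfl fun s _ => key s, Finset.sum_ite_mem, Finset.univ_inter]

theorem stmt_7 {V : Type} [Fintype V] [DecidableEq V] (G : SimpleGraph V)
    (hconn : G.Connected) (k : ℕ) (r : Fin k → V)
    (C : ∀ i : Fin k, G.Walk (r i) (r i)) (hcyc : ∀ i, (C i).IsCycle)
    (hindep : LinearIndependent (ZMod 2) fun i => walkChain (C i))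
    (hspan : ∀ c : Sym2 V → ZMod 2, cycleCond G c →
      c ∈ Submodule.span (ZMod 2) (Set.range fun i => walkChain (C i)))
    (e : Fin k → Sym2 V) (he : ∀ i, e i ∈ (C i).edges)
    (hlater : ∀ i j, i < j → e i ∉ (C j).edges) :
    (G.deleteEdges (Set.range e)).IsTree := by
  classical
  -- Connectivity: delete the edges one at a time, each lies on a cycle avoiding
  -- the previously deleted edges.
  have key : ∀ m : ℕ, (G.deleteEdges (e '' {i : Fin k | (i : ℕ) < m})).Connected := by
    intro m
    induction m with
    | zero =>
      have h0 : {i : Fin k | (i : ℕ) < 0} = (∅ : Set (Fin k)) := by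
        ext i; simp
      rw [h0]
      simpa using hconn
    | succ m ih =>
      by_cases hm : m < k
      · set j : Fin k := ⟨m, hm⟩ with hj
        have hset0 : {i : Fin k | (i : ℕ) < m + 1} = {i : Fin k | (i : ℕ) < m} ∪ {j} := by
          ext i
          simp only [Set.mem_setOf_eq, Set.mem_union, Set.mem_singleton_iff, Fin.ext_iff, hj, Fin.val_mk]
          omega
        have hset : (e '' {i : Fin k | (i : ℕ) < m + 1})
            = (e '' {i : Fin k | (i : ℕ) < m}) ∪ {e j} := by
          rw [hset0, Set.image_union, Set.image_singleton]
        rw [hset, ← deleteEdges_deleteEdges]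
        have hedges : ∀ s ∈ (C j).edges, s ∉ e '' {i : Fin k | (i : ℕ) < m} := by
          rintro s hs ⟨i, hi, rfl⟩
          refine hlater i j ?_ hs
          simp only [Fin.lt_def, hj]
          exact hi
        exact aux_conn_del ih (e j) ((C j).toDeleteEdges _ hedges)
          ((hcyc j).transfer _) (by rw [Walk.edges_transfer]; exact he j)
      · have hset : {i : Fin k | (i : ℕ) < m + 1} = {i : Fin k | (i : ℕ) < m} := by
          ext i
          have := i.isLt
          simp only [Set.mem_setOf_eq]
          omega
        rw [hset]
        exact ih
  have hconnH : (G.deleteEdges (Set.range e)).Connected := by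
    have hrange : Set.range e = e '' {i : Fin k | (i : ℕ) < k} := by
      rw [show {i : Fin k | (i : ℕ) < k} = Set.univ from by ext i; simp [i.isLt],
        Set.image_univ]
    rw [hrange]
    exact key k
  -- Acyclicity
  have hacyc : (G.deleteEdges (Set.range e)).IsAcyclic := by
    intro u p hp
    have hcond : cycleCond G (walkChain p) := by
      constructor
      · intro s hs
        have hmem : s ∈ p.edges := by
          by_contra h
          simp [walkChain, h] at hs
        exact edgeSet_mono (G.deleteEdges_le _) (p.edges_subset_edgeSet hmem)
      · intro x
        rw [aux_sum_eq p hp.isTrail.edges_nodup x, aux_boundary]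
        split_ifs <;> decide
    obtain ⟨a, ha⟩ := (Submodule.mem_span_range_iff_exists_fun (ZMod 2)).mp (hspan _ hcond)
    have hnz : ∃ i, a i ≠ 0 := by
      by_contra h
      push_neg at h
      have hzero : walkChain p = 0 := by
        rw [← ha]; funext s; simp [h]
      have h3 := hp.three_le_length
      have hne : p.edges ≠ [] := by
        intro hnil
        have hlen := p.length_edges
        rw [hnil] at hlen
        simp at hlen
        omega
      obtain ⟨s0, hs0⟩ := List.exists_mem_of_ne_nil _ hne
      have h1 : walkChain p s0 = 1 := by simp [walkChain, hs0]
      rw [hzero] at h1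
      simp at h1
    have hS : (Finset.univ.filter (fun i => a i ≠ 0)).Nonempty := by
      obtain ⟨i, hi⟩ := hnz
      exact ⟨i, Finset.mem_filter.mpr ⟨Finset.mem_univ _, hi⟩⟩
    set S := Finset.univ.filter (fun i => a i ≠ 0) with hSdef
    set i0 := S.min' hS with hi0def
    have hi0 : a i0 ≠ 0 := (Finset.mem_filter.mp (S.min'_mem hS)).2
    have heval : ∑ i : Fin k, a i * walkChain (C i) (e i0) = walkChain p (e i0) := by
      have hc := congrFun ha (e i0)
      simpa [Finset.sum_apply, Pi.smul_apply, smul_eq_mul] using hc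
    have hright : walkChain p (e i0) = 0 := by
      simp only [walkChain]
      rw [if_neg]
      intro hmem
      have h2 : e i0 ∈ (G.deleteEdges (Set.range e)).edgeSet := p.edges_subset_edgeSet hmem
      rw [edgeSet_deleteEdges] at h2
      exact h2.2 ⟨i0, rfl⟩
    have hleft : ∑ i : Fin k, a i * walkChain (C i) (e i0) = a i0 := by
      rw [Finset.sum_eq_single i0]
      · simp [walkChain, he i0]
      · intro j _ hj
        rcases lt_or_gt_of_ne hj with hlt | hgt
        · have hz : a j = 0 := by
            by_contra hcon
            have hjS : j ∈ S := Finset.mem_filter.mpr ⟨Finset.mem_univ _, hcon⟩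
            exact absurd (S.min'_le j hjS) (not_le.mpr hlt)
          simp [hz]
        · simp [walkChain, hlater i0 j hgt]
      · intro hcon
        exact absurd (Finset.mem_univ i0) hcon
    exact hi0 (by rw [← hleft, heval, hright])
  exact ⟨hconnH, hacyc⟩
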